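/- arXiv:1712.04846 — 3 statements merged into one kernel-verified Lean document; each statement's English description precedes it below -/
import Mathlib

section
/- Let n ≥ 2 and let Ψ: [0,∞) → ℝ be continuously differentiable. If the mapping F ↦ Ψ(‖dev_n log U‖²) is rank-one convex on GL⁺(n), where U = √(FᵀF), then Ψ is monotone increasing on [0,∞). -/
open Matrix Real

attribute [local instance] Matrix.frobeniusNormedAddCommGroup Matrix.frobeniusNormedSpace

noncomputable section

/-- The space of real `n × n` matrices. -/
abbrev Mat (n : ℕ) := Matrix (Fin n) (Fin n) ℝ

/-- `GL⁺(n)`: real `n × n` matrices with positive determinant. -/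
def GLp (n : ℕ) : Set (Mat n) := {F | 0 < F.det}

/-- Frobenius inner product `⟨X, Y⟩ = tr (X Yᵀ)`. -/
def inn {n : ℕ} (X Y : Mat n) : ℝ := (X * Yᵀ).trace

/-- Squared Frobenius norm `‖X‖² = tr (Xᵀ X)`. -/
def nsq {n : ℕ} (X : Mat n) : ℝ := (Xᵀ * X).trace

/-- The primary matrix function associated to `f : ℝ → ℝ`: applies `f` to the eigenvalues
in a spectral decomposition of a Hermitian (i.e. real symmetric) matrix, junk value `0`
otherwise. -/
def matFun {n : ℕ} (f : ℝ → ℝ) (A : Mat n) : Mat n :=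
  if hA : A.IsHermitian then
    (hA.eigenvectorUnitary : Mat n) * Matrix.diagonal (f ∘ hA.eigenvalues) *
      (star (hA.eigenvectorUnitary : Mat n))
  else 0

/-- Principal square root of a symmetric positive semidefinite matrix. -/
def matSqrt {n : ℕ} (A : Mat n) : Mat n := matFun Real.sqrt A

/-- Principal matrix logarithm of a symmetric positive definite matrix. -/
def matLog {n : ℕ} (A : Mat n) : Mat n := matFun Real.log A

/-- `log U` where `U = √(FᵀF)` is the right stretch tensor of `F`. -/
def logU {n : ℕ} (F : Mat n) : Mat n := matLog (matSqrt (Fᵀ * F))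

/-- `log V` where `V = √(FFᵀ)` is the left stretch tensor of `F`. -/
def logV {n : ℕ} (F : Mat n) : Mat n := matLog (matSqrt (F * Fᵀ))

/-- Deviatoric (trace-free) part `dev_n X = X - (tr X / n) 𝟙`. -/
def dev {n : ℕ} (X : Mat n) : Mat n := X - (X.trace / n) • (1 : Mat n)

/-- Rank-one convexity of `W : GL⁺(n) → ℝ`: along every rank-one line segment contained in
`GL⁺(n)`, the function is convex. -/
def RankOneConvex {n : ℕ} (W : Mat n → ℝ) : Prop :=
  ∀ F ∈ GLp n, ∀ ξ η : Fin n → ℝ, ∀ I : Set ℝ, Convex ℝ I →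
    (∀ t ∈ I, 0 < (F + t • vecMulVec ξ η).det) →
    ConvexOn ℝ I (fun t => W (F + t • vecMulVec ξ η))

end

noncomputable section Aux

variable {n : ℕ}

lemma matFun_affine (A : Mat n) (hA : A.IsHermitian) (f : ℝ → ℝ) (α β : ℝ)
    (h : ∀ i, f (hA.eigenvalues i) = α + β * hA.eigenvalues i) :
    matFun f A = α • 1 + β • A := by
  have hdiag : Matrix.diagonal (f ∘ hA.eigenvalues)
      = α • (1 : Mat n) + β • Matrix.diagonal hA.eigenvalues := by
    ext i j
    rcases eq_or_ne i j with rfl | hij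
    · simp [Matrix.diagonal_apply_eq, Matrix.one_apply_eq, h i]
    · simp [Matrix.diagonal_apply_ne _ hij, Matrix.one_apply_ne hij]
  have hU : (hA.eigenvectorUnitary : Mat n) * star (hA.eigenvectorUnitary : Mat n) = 1 :=
    (Matrix.mem_unitaryGroup_iff).mp (hA.eigenvectorUnitary).2
  have hspec := hA.spectral_theorem
  rw [RCLike.ofReal_real_eq_id] at hspec
  simp only [Function.comp_id, Function.id_comp, id_eq, Unitary.conjStarAlgAut_apply] at hspec
  rw [matFun, dif_pos hA, hdiag]
  rw [mul_add, add_mul, mul_smul_comm, smul_mul_assoc, mul_one, hU,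
    mul_smul_comm, smul_mul_assoc, ← hspec]

lemma matFun_diagonal_of_affine (d : Fin n → ℝ) (f : ℝ → ℝ) (α β : ℝ)
    (h : ∀ x ∈ Set.range d, f x = α + β * x) :
    matFun f (Matrix.diagonal d) = Matrix.diagonal (fun i => f (d i)) := by
  have hA : (Matrix.diagonal d).IsHermitian := Matrix.isHermitian_diagonal d
  have hev : ∀ i, hA.eigenvalues i ∈ Set.range d := by
    intro i
    have := hA.eigenvalues_mem_spectrum_real i
    rwa [spectrum_diagonal] at this
  rw [matFun_affine _ hA f α β (fun i => h _ (hev i))]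
  ext i j
  rcases eq_or_ne i j with rfl | hij
  · simp [Matrix.diagonal_apply_eq, Matrix.one_apply_eq, h (d i) ⟨i, rfl⟩]
  · simp [Matrix.diagonal_apply_ne _ hij, Matrix.one_apply_ne hij]

/-- The diagonal family used in the proof: `diag(s, 1, …, 1)`. -/
def dd (n : ℕ) [NeZero n] (s : ℝ) : Fin n → ℝ := fun i => if i = 0 then s else 1

lemma logU_dd [NeZero n] (s : ℝ) (hs : 0 < s) :
    logU (Matrix.diagonal (dd n s))
      = Matrix.diagonal (fun i => if i = 0 then Real.log s else 0) := by
  have hne : s + 1 ≠ 0 := by positivity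
  have h1 : (Matrix.diagonal (dd n s))ᵀ * Matrix.diagonal (dd n s)
      = Matrix.diagonal (fun i : Fin n => if i = 0 then s ^ 2 else 1) := by
    rw [Matrix.diagonal_transpose, Matrix.diagonal_mul_diagonal]
    apply congrArg Matrix.diagonal
    funext i
    by_cases hi : i = 0 <;> simp [dd, hi, sq]
  have h2 : matSqrt (Matrix.diagonal (fun i : Fin n => if i = 0 then s ^ 2 else 1))
      = Matrix.diagonal (dd n s) := by
    rw [matSqrt, matFun_diagonal_of_affine _ _ (s / (s + 1)) (1 / (s + 1))]
    · apply congrArg Matrix.diagonal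
      funext i
      by_cases hi : i = 0 <;>
        simp [dd, hi, Real.sqrt_sq hs.le]
    · rintro x ⟨i, rfl⟩
      by_cases hi : i = 0 <;> simp only [hi, if_pos, if_true, if_neg, if_false]
      · rw [Real.sqrt_sq hs.le]; field_simp; ring
      · rw [Real.sqrt_one]; field_simp
  have h3 : matLog (Matrix.diagonal (dd n s))
      = Matrix.diagonal (fun i : Fin n => if i = 0 then Real.log s else 0) := by
    rcases eq_or_ne s 1 with rfl | hs1
    · rw [matLog, matFun_diagonal_of_affine _ _ 0 0]
      · apply congrArg Matrix.diagonal
        funext i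
        by_cases hi : i = 0 <;> simp [dd, hi]
      · rintro x ⟨i, rfl⟩
        by_cases hi : i = 0 <;> simp [dd, hi]
    · have hs1' : s - 1 ≠ 0 := sub_ne_zero.mpr hs1
      rw [matLog, matFun_diagonal_of_affine _ _ (-(Real.log s / (s - 1))) (Real.log s / (s - 1))]
      · apply congrArg Matrix.diagonal
        funext i
        by_cases hi : i = 0 <;> simp [dd, hi]
      · rintro x ⟨i, rfl⟩
        by_cases hi : i = 0 <;> simp only [dd, hi, if_pos, if_true, if_neg, if_false]
        · field_simp; ring
        · rw [Real.log_one]; ring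
  rw [logU, h1, h2, h3]

lemma dev_diagonal (e : Fin n → ℝ) :
    dev (Matrix.diagonal e) = Matrix.diagonal (fun i => e i - (∑ j, e j) / n) := by
  unfold dev
  rw [Matrix.trace_diagonal]
  ext i j
  rcases eq_or_ne i j with rfl | hij
  · simp [Matrix.diagonal_apply_eq, Matrix.one_apply_eq]
  · simp [Matrix.diagonal_apply_ne _ hij, Matrix.one_apply_ne hij]

lemma nsq_diagonal (e : Fin n → ℝ) :
    nsq (Matrix.diagonal e) = ∑ i, (e i) ^ 2 := by
  unfold nsq
  rw [Matrix.diagonal_transpose, Matrix.diagonal_mul_diagonal, Matrix.trace_diagonal]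
  exact Finset.sum_congr rfl fun i _ => (sq (e i)).symm

lemma nsq_dev [NeZero n] (ℓ : ℝ) :
    nsq (dev (Matrix.diagonal (fun i : Fin n => if i = 0 then ℓ else 0)))
      = ((n : ℝ) - 1) / n * ℓ ^ 2 := by
  have hN : (0:ℝ) < (n:ℝ) := by
    have := Nat.pos_of_ne_zero (NeZero.ne n); exact_mod_cast this
  rw [dev_diagonal, nsq_diagonal]
  have hsum : (∑ j : Fin n, (if j = 0 then ℓ else 0)) = ℓ := by simp
  rw [hsum]
  have hterm : ∀ i : Fin n, ((if i = 0 then ℓ else 0) - ℓ / n) ^ 2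
      = (ℓ / n) ^ 2 + (if i = 0 then (ℓ - ℓ / n) ^ 2 - (ℓ / n) ^ 2 else 0) := by
    intro i
    by_cases hi : i = 0 <;> simp [hi]
  rw [Finset.sum_congr rfl fun i _ => hterm i, Finset.sum_add_distrib]
  rw [Finset.sum_const, Finset.sum_ite_eq' Finset.univ (0 : Fin n)]
  simp only [Finset.mem_univ, if_true, Finset.card_univ, Fintype.card_fin, nsmul_eq_mul]
  have hNne : (n:ℝ) ≠ 0 := hN.ne'
  field_simp
  ring

lemma det_dd [NeZero n] (s : ℝ) : (Matrix.diagonal (dd n s)).det = s := by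
  rw [Matrix.det_diagonal]
  simp [dd, Finset.prod_ite_eq' Finset.univ (0 : Fin n)]

lemma line_dd [NeZero n] (t : ℝ) :
    Matrix.diagonal (dd n 1)
        + t • Matrix.vecMulVec (fun i : Fin n => if i = 0 then (1:ℝ) else 0)
            (fun i : Fin n => if i = 0 then (1:ℝ) else 0)
      = Matrix.diagonal (dd n (1 + t)) := by
  ext i j
  rcases eq_or_ne i j with rfl | hij
  · by_cases hi : i = 0 <;>
      simp [dd, hi, Matrix.diagonal_apply_eq, Matrix.vecMulVec_apply]
  · have : ¬(i = 0 ∧ j = 0) := by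
      rintro ⟨rfl, rfl⟩; exact hij rfl
    by_cases hi : i = 0 <;> by_cases hj : j = 0 <;>
      simp_all [dd, Matrix.diagonal_apply_ne _ hij, Matrix.vecMulVec_apply]

end Aux

/-- **Lemma 3.2.** Let `n ≥ 2` and let `Ψ : [0,∞) → ℝ` be continuously differentiable. If
`F ↦ Ψ(‖dev_n log U‖²)` (with `U = √(FᵀF)`) is rank-one convex on `GL⁺(n)`, then `Ψ` is
monotone increasing on `[0,∞)`. -/
theorem monotonicity_from_rank_one_convexity_devLogU
    (n : ℕ) (hn : 2 ≤ n)
    (Ψ : ℝ → ℝ) (hΨ : ContDiffOn ℝ 1 Ψ (Set.Ici 0))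
    (hW : RankOneConvex (fun F : Mat n => Ψ (nsq (dev (logU F))))) :
    MonotoneOn Ψ (Set.Ici 0) := by
  haveI : NeZero n := ⟨by omega⟩
  have hN2 : (2:ℝ) ≤ (n:ℝ) := by exact_mod_cast hn
  set c : ℝ := ((n:ℝ) - 1) / n with hc
  have hc0 : 0 < c := by
    apply div_pos <;> linarith
  intro a ha b hb hab
  rcases eq_or_lt_of_le hab with rfl | hab'
  · exact le_rfl
  have ha0 : (0:ℝ) ≤ a := ha
  have hb0 : (0:ℝ) ≤ b := hb
  set u := Real.sqrt (a / c) with hu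
  set v := Real.sqrt (b / c) with hv
  have hu0 : 0 ≤ u := Real.sqrt_nonneg _
  have huv : u < v := by
    apply Real.sqrt_lt_sqrt (div_nonneg ha0 hc0.le)
    exact (div_lt_div_iff_of_pos_right hc0).mpr hab'
  have hv0 : 0 < v := lt_of_le_of_lt hu0 huv
  have hcu : c * u ^ 2 = a := by
    rw [hu, Real.sq_sqrt (div_nonneg ha0 hc0.le), mul_div_cancel₀ _ hc0.ne']
  have hcv : c * v ^ 2 = b := by
    rw [hv, Real.sq_sqrt (div_nonneg hb0 hc0.le), mul_div_cancel₀ _ hc0.ne']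
  set t₁ : ℝ := Real.exp (-v) - 1 with ht₁
  set t₂ : ℝ := Real.exp v - 1 with ht₂
  set t₀ : ℝ := Real.exp u - 1 with ht₀
  have h12 : t₁ < t₂ := by
    have : Real.exp (-v) < Real.exp v := Real.exp_lt_exp.mpr (by linarith)
    simp only [ht₁, ht₂]; linarith
  have h10 : t₁ ≤ t₀ := by
    have : Real.exp (-v) ≤ Real.exp u := Real.exp_le_exp.mpr (by linarith)
    simp only [ht₁, ht₀]; linarith
  have h02 : t₀ ≤ t₂ := by
    have : Real.exp u ≤ Real.exp v := Real.exp_le_exp.mpr huv.le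
    simp only [ht₀, ht₂]; linarith
  set ξ : Fin n → ℝ := fun i => if i = 0 then 1 else 0 with hξ
  set I : Set ℝ := Set.Icc t₁ t₂ with hI
  have hpos : ∀ t ∈ I, 0 < 1 + t := by
    intro t ht
    have h1 : t₁ ≤ t := ht.1
    have h0 : 0 < Real.exp (-v) := Real.exp_pos _
    simp only [ht₁] at h1
    linarith
  have hdet : ∀ t ∈ I, 0 < (Matrix.diagonal (dd n 1) + t • Matrix.vecMulVec ξ ξ).det := by
    intro t ht
    rw [hξ, line_dd, det_dd]
    exact hpos t ht
  have hFmem : Matrix.diagonal (dd n 1) ∈ GLp n := by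
    show 0 < (Matrix.diagonal (dd n 1)).det
    rw [det_dd]; norm_num
  have hcvx := hW (Matrix.diagonal (dd n 1)) hFmem ξ ξ I (convex_Icc _ _) hdet
  have hval : ∀ t ∈ I,
      Ψ (nsq (dev (logU (Matrix.diagonal (dd n 1) + t • Matrix.vecMulVec ξ ξ))))
        = Ψ (c * Real.log (1 + t) ^ 2) := by
    intro t ht
    rw [hξ, line_dd, logU_dd _ (hpos t ht), nsq_dev]
  set lam : ℝ := (t₂ - t₀) / (t₂ - t₁) with hlam
  have hd : t₂ - t₁ ≠ 0 := sub_ne_zero.mpr h12.ne'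
  have hlam0 : 0 ≤ lam := div_nonneg (by linarith) (by linarith)
  have hlam1 : lam ≤ 1 := by
    rw [hlam, div_le_one (by linarith)]; linarith
  have hmem1 : t₁ ∈ I := ⟨le_refl _, h12.le⟩
  have hmem2 : t₂ ∈ I := ⟨h12.le, le_refl _⟩
  have hcomb : lam • t₁ + (1 - lam) • t₂ = t₀ := by
    simp only [smul_eq_mul, hlam]
    field_simp
    ring
  have hkey := hcvx.2 hmem1 hmem2 hlam0 (by linarith : (0:ℝ) ≤ 1 - lam) (by ring)
  rw [hcomb] at hkey
  have hmem0 : t₀ ∈ I := ⟨h10, h02⟩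
  simp only [hval t₀ hmem0, hval t₁ hmem1, hval t₂ hmem2, smul_eq_mul] at hkey
  have e0 : 1 + t₀ = Real.exp u := by rw [ht₀]; ring
  have e1 : 1 + t₁ = Real.exp (-v) := by rw [ht₁]; ring
  have e2 : 1 + t₂ = Real.exp v := by rw [ht₂]; ring
  rw [e0, e1, e2, Real.log_exp, Real.log_exp, Real.log_exp] at hkey
  simp only [Even.neg_pow (by norm_num : Even 2)] at hkey
  rw [hcu, hcv] at hkey
  linarith
end

section
/- Let F = diag(1, e²⁰, e¹⁵) ∈ GL⁺(3), ξ = (0, 1/√2, 1/√2)ᵀ ∈ ℝ³, and η = (1/29)·(0, 10e²⁰, −25e¹⁵)ᵀ ∈ ℝ³. Define h(t) = ‖dev₃ log √((F + t·ξ⊗η)(F + t·ξ⊗η)ᵀ)‖² for t in an open interval around 0 on which det(F + t·ξ⊗η) > 0 (one has [det(F + t·ξ⊗η)]² = e⁷⁰(15t − 29√2)²/1682). Then h is twice differentiable at 0 with h'(0) = 0 and h''(0) = −25(4e¹⁰ − 49)/(841(e¹⁰ − 1)) < 0; in particular, the function F ↦ ‖dev₃ log V‖² (with V = √(FFᵀ))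 has a vanishing first derivative and a negative second derivative at F in the rank-one direction ξ⊗η. -/
open Matrix Real

attribute [local instance] Matrix.frobeniusNormedAddCommGroup Matrix.frobeniusNormedSpace

noncomputable section AuxProof
open Polynomial

variable {n : ℕ}

lemma aeval_conj (U B : Mat n) (hU : U * star U = 1) (hU' : star U * U = 1) (p : ℝ[X]) :
    aeval (U * B * star U) p = U * aeval B p * star U := by
  induction p using Polynomial.induction_on' with
  | add p q hp hq => rw [map_add, map_add, hp, hq, mul_add, add_mul]
  | monomial k a =>
    rw [aeval_monomial, aeval_monomial]
    have hpow : (U * B * star U) ^ k = U * B ^ k * star U := by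
      induction k with
      | zero => rw [pow_zero, pow_zero, mul_one, hU]
      | succ k ih =>
        rw [pow_succ, ih, pow_succ, mul_assoc (U * B ^ k) (star U) _, mul_assoc U B (star U),
          ← mul_assoc (star U) U _, hU', one_mul, ← mul_assoc, ← mul_assoc, mul_assoc U (B^k) B]
    have halg : ∀ M : Mat n, (algebraMap ℝ (Mat n) a) * M = a • M := by
      intro M; rw [Algebra.algebraMap_eq_smul_one, smul_mul_assoc, one_mul]
    rw [hpow, halg, halg, mul_smul_comm, smul_mul_assoc]

lemma aeval_diagonal (d : Fin n → ℝ) (p : ℝ[X]) :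
    aeval (Matrix.diagonal d) p = Matrix.diagonal (fun i => p.eval (d i)) := by
  induction p using Polynomial.induction_on' with
  | add p q hp hq =>
    rw [map_add, hp, hq, diagonal_add]
    simp [eval_add]
  | monomial k a =>
    rw [aeval_monomial, algebraMap_eq_diagonal, diagonal_pow, diagonal_mul_diagonal]
    congr 1; funext i
    simp [eval_monomial]

section Herm

variable {A : Mat n} (hA : A.IsHermitian)

lemma star_coe_unitary : star (hA.eigenvectorUnitary : Mat n) * (hA.eigenvectorUnitary : Mat n) = 1 := by
  exact Matrix.mem_unitaryGroup_iff'.mp (hA.eigenvectorUnitary).2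

lemma coe_unitary_star : (hA.eigenvectorUnitary : Mat n) * star (hA.eigenvectorUnitary : Mat n) = 1 := by
  exact Matrix.mem_unitaryGroup_iff.mp (hA.eigenvectorUnitary).2

lemma spectral_real :
    A = (hA.eigenvectorUnitary : Mat n) * Matrix.diagonal hA.eigenvalues *
      star (hA.eigenvectorUnitary : Mat n) := by
  have := hA.spectral_theorem
  rw [Unitary.conjStarAlgAut_apply] at this
  convert this using 3 <;> rfl

lemma aeval_eq_conj_diag (p : ℝ[X]) :
    aeval A p = (hA.eigenvectorUnitary : Mat n) *
      Matrix.diagonal (fun i => p.eval (hA.eigenvalues i)) *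
      star (hA.eigenvectorUnitary : Mat n) := by
  conv_lhs => rw [spectral_real hA]
  rw [aeval_conj _ _ (coe_unitary_star hA) (star_coe_unitary hA), aeval_diagonal]

lemma trace_aeval (p : ℝ[X]) :
    (aeval A p).trace = ∑ i, p.eval (hA.eigenvalues i) := by
  rw [aeval_eq_conj_diag hA, Matrix.trace_mul_cycle, star_coe_unitary hA, one_mul,
    Matrix.trace_diagonal]

lemma det_smul_one_sub_aeval (p : ℝ[X]) (ν : ℝ) :
    (ν • (1 : Mat n) - aeval A p).det = ∏ i, (ν - p.eval (hA.eigenvalues i)) := by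
  have h1 : ν • (1 : Mat n) = (hA.eigenvectorUnitary : Mat n) *
      Matrix.diagonal (fun _ => ν) * star (hA.eigenvectorUnitary : Mat n) := by
    rw [← Matrix.smul_one_eq_diagonal, mul_smul_comm, smul_mul_assoc, mul_one,
      coe_unitary_star hA]
  have key : ((hA.eigenvectorUnitary : Mat n)).det * (star (hA.eigenvectorUnitary : Mat n)).det = 1 := by
    rw [mul_comm, ← Matrix.det_mul, star_coe_unitary hA, Matrix.det_one]
  rw [aeval_eq_conj_diag hA, h1, ← Matrix.sub_mul, ← Matrix.mul_sub, Matrix.det_mul,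
    Matrix.det_mul, diagonal_sub, Matrix.det_diagonal]
  linear_combination (∏ i, (ν - p.eval (hA.eigenvalues i))) * key

lemma det_smul_one_sub (μ : ℝ) :
    (μ • (1 : Mat n) - A).det = ∏ i, (μ - hA.eigenvalues i) := by
  have := det_smul_one_sub_aeval hA X μ
  simpa using this

lemma eig_mem (c : Fin n → ℝ)
    (hdet : ∀ μ : ℝ, (μ • (1 : Mat n) - A).det = ∏ i, (μ - c i)) (j : Fin n) :
    ∃ i, hA.eigenvalues j = c i := by
  have h0 : (∏ i, (hA.eigenvalues j - hA.eigenvalues i)) = 0 :=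
    Finset.prod_eq_zero (Finset.mem_univ j) (by ring)
  have := (det_smul_one_sub hA (hA.eigenvalues j)).symm.trans (hdet (hA.eigenvalues j))
  rw [h0] at this
  obtain ⟨i, _, hi⟩ := Finset.prod_eq_zero_iff.mp this.symm
  exact ⟨i, by linarith⟩

lemma eig_multiset (c : Fin n → ℝ)
    (hdet : ∀ μ : ℝ, (μ • (1 : Mat n) - A).det = ∏ i, (μ - c i)) :
    Multiset.map hA.eigenvalues Finset.univ.val = Multiset.map c Finset.univ.val := by
  have hpoly : ((Multiset.map hA.eigenvalues Finset.univ.val).map (fun a => X - Polynomial.C a)).prod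
      = ((Multiset.map c Finset.univ.val).map (fun a => X - Polynomial.C a)).prod := by
    apply Polynomial.funext
    intro μ
    have key : ∀ (d : Fin n → ℝ),
        (((Multiset.map d Finset.univ.val).map (fun a => X - Polynomial.C a)).prod).eval μ
          = ∏ i, (μ - d i) := by
      intro d
      rw [Polynomial.eval_multiset_prod, Multiset.map_map, Multiset.map_map,
        Finset.prod_eq_multiset_prod]
      exact congrArg Multiset.prod (Multiset.map_congr rfl (fun i _ => by simp))
    rw [key, key, ← hdet μ, det_smul_one_sub hA]
  have := congrArg Polynomial.roots hpoly
  rwa [Polynomial.roots_multiset_prod_X_sub_C, Polynomial.roots_multiset_prod_X_sub_C] at this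

lemma eig_sum_transfer (c : Fin n → ℝ)
    (hdet : ∀ μ : ℝ, (μ • (1 : Mat n) - A).det = ∏ i, (μ - c i)) (f : ℝ → ℝ) :
    ∑ i, f (hA.eigenvalues i) = ∑ i, f (c i) := by
  have := congrArg (fun s => (Multiset.map f s).sum) (eig_multiset hA c hdet)
  simpa [Finset.sum, Multiset.map_map, Function.comp_def] using this

lemma eig_prod_transfer (c : Fin n → ℝ)
    (hdet : ∀ μ : ℝ, (μ • (1 : Mat n) - A).det = ∏ i, (μ - c i)) (f : ℝ → ℝ) :
    ∏ i, f (hA.eigenvalues i) = ∏ i, f (c i) := by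
  have := congrArg (fun s => (Multiset.map f s).prod) (eig_multiset hA c hdet)
  rw [Finset.prod_eq_multiset_prod, Finset.prod_eq_multiset_prod,
    show (fun i => f (hA.eigenvalues i)) = f ∘ hA.eigenvalues from rfl,
    show (fun i => f (c i)) = f ∘ c from rfl, ← Multiset.map_map, ← Multiset.map_map]
  exact this

lemma matFun_eq_aeval (f : ℝ → ℝ) (p : ℝ[X])
    (hp : ∀ i, p.eval (hA.eigenvalues i) = f (hA.eigenvalues i)) :
    matFun f A = aeval A p := by
  have hfe : (f ∘ hA.eigenvalues) = fun i => p.eval (hA.eigenvalues i) :=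
    funext fun i => (hp i).symm
  rw [matFun, dif_pos hA, aeval_eq_conj_diag hA, hfe]

include hA in
lemma aeval_isHermitian (p : ℝ[X]) : (aeval A p).IsHermitian := by
  rw [aeval_eq_conj_diag hA, Matrix.star_eq_conjTranspose]
  exact Matrix.isHermitian_mul_mul_conjTranspose _ (Matrix.isHermitian_diagonal _)

end Herm


lemma injOn3 {a b c : ℝ} (h1 : a ≠ b) (h2 : a ≠ c) (h3 : b ≠ c) :
    Set.InjOn (![a,b,c]) (Finset.univ : Finset (Fin 3)) := by
  intro i _ j _ hij
  fin_cases i <;> fin_cases j <;> simp_all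

lemma nsq_dev3 (X : Mat 3) (hX : Xᵀ = X) :
    nsq (dev X) = (X * X).trace - X.trace ^ 2 / 3 := by
  rw [nsq, dev]
  simp only [Nat.cast_ofNat]
  have h1 : (X - (X.trace / 3) • (1 : Mat 3))ᵀ = X - (X.trace / 3) • (1 : Mat 3) := by
    rw [Matrix.transpose_sub, hX, Matrix.transpose_smul, Matrix.transpose_one]
  rw [h1, Matrix.sub_mul, Matrix.mul_sub, Matrix.mul_sub, Matrix.trace_sub, Matrix.trace_sub,
    Matrix.trace_sub, Matrix.smul_mul, Matrix.mul_smul, Matrix.one_mul, Matrix.mul_one,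
    Matrix.mul_smul, Matrix.smul_mul, Matrix.one_mul, Matrix.trace_smul, Matrix.trace_smul,
    Matrix.trace_smul, Matrix.trace_one]
  simp only [smul_eq_mul, Fintype.card_fin]
  ring

lemma main3 {A : Mat 3} (hA : A.IsHermitian) (l1 l2 : ℝ)
    (h2 : 1 < l2) (h21 : l2 < l1)
    (hdet : ∀ μ : ℝ, (μ • (1 : Mat 3) - A).det = (μ - 1) * (μ - l1) * (μ - l2)) :
    nsq (dev (matLog (matSqrt A))) =
      (Real.log l1 ^ 2 + Real.log l2 ^ 2) / 4 - (Real.log l1 + Real.log l2) ^ 2 / 12 := by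
  have hl2 : (0:ℝ) < l2 := by linarith
  have hl1 : (0:ℝ) < l1 := by linarith
  have hdet' : ∀ μ : ℝ, (μ • (1 : Mat 3) - A).det = ∏ i, (μ - (![1, l1, l2]) i) := by
    intro μ
    rw [hdet μ, Fin.prod_univ_three]
    simp only [Matrix.cons_val_zero, Matrix.cons_val_one, Matrix.head_cons, Matrix.cons_val_two, Matrix.tail_cons]
    try ring
  have hcinj : Set.InjOn (![1, l1, l2]) (Finset.univ : Finset (Fin 3)) :=
    injOn3 (by linarith) (by linarith) (by linarith)
  set p : Polynomial ℝ :=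
    Lagrange.interpolate Finset.univ (![1, l1, l2]) (fun i => Real.sqrt ((![1, l1, l2]) i)) with hp
  have hpeval : ∀ i, p.eval ((![1, l1, l2]) i) = Real.sqrt ((![1, l1, l2]) i) := by
    intro i
    exact Lagrange.eval_interpolate_at_node _ hcinj (Finset.mem_univ i)
  have hpe : ∀ i, p.eval (hA.eigenvalues i) = Real.sqrt (hA.eigenvalues i) := by
    intro i
    obtain ⟨j, hj⟩ := eig_mem hA _ hdet' i
    rw [hj, hpeval]
  have hS : matSqrt A = aeval A p := matFun_eq_aeval hA Real.sqrt p hpe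
  have hSH : (matSqrt A).IsHermitian := hS ▸ aeval_isHermitian hA p
  have hdetS : ∀ ν : ℝ, (ν • (1 : Mat 3) - matSqrt A).det
      = ∏ i, (ν - (![1, Real.sqrt l1, Real.sqrt l2]) i) := by
    intro ν
    rw [hS, det_smul_one_sub_aeval hA p ν]
    have e1 : ∀ i, (ν - p.eval (hA.eigenvalues i))
        = (fun x => ν - Real.sqrt x) (hA.eigenvalues i) := by
      intro i; rw [hpe i]
    rw [Finset.prod_congr rfl (fun i _ => e1 i),
      eig_prod_transfer hA _ hdet' (fun x => ν - Real.sqrt x)]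
    apply Finset.prod_congr rfl
    intro i _
    fin_cases i <;> simp
  have hs2 : 1 < Real.sqrt l2 := by
    rw [show (1:ℝ) = Real.sqrt 1 from (Real.sqrt_one).symm]
    exact Real.sqrt_lt_sqrt (by norm_num) h2
  have hs21 : Real.sqrt l2 < Real.sqrt l1 := Real.sqrt_lt_sqrt (le_of_lt hl2) h21
  have hcinj' : Set.InjOn (![1, Real.sqrt l1, Real.sqrt l2]) (Finset.univ : Finset (Fin 3)) :=
    injOn3 (by linarith) (by linarith) (by linarith)
  set q : Polynomial ℝ := Lagrange.interpolate Finset.univ (![1, Real.sqrt l1, Real.sqrt l2])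
    (fun i => Real.log ((![1, Real.sqrt l1, Real.sqrt l2]) i)) with hq
  have hqeval : ∀ i, q.eval ((![1, Real.sqrt l1, Real.sqrt l2]) i)
      = Real.log ((![1, Real.sqrt l1, Real.sqrt l2]) i) := by
    intro i
    exact Lagrange.eval_interpolate_at_node _ hcinj' (Finset.mem_univ i)
  have hqe : ∀ i, q.eval (hSH.eigenvalues i) = Real.log (hSH.eigenvalues i) := by
    intro i
    obtain ⟨j, hj⟩ := eig_mem hSH _ hdetS i
    rw [hj, hqeval]
  have hL : matLog (matSqrt A) = aeval (matSqrt A) q := matFun_eq_aeval hSH Real.log q hqe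
  have hLH : (matLog (matSqrt A)).IsHermitian := hL ▸ aeval_isHermitian hSH q
  have hLt : (matLog (matSqrt A))ᵀ = matLog (matSqrt A) := by
    have := hLH
    rwa [Matrix.IsHermitian, Matrix.conjTranspose_eq_transpose_of_trivial] at this
  have htr : (matLog (matSqrt A)).trace = Real.log (Real.sqrt l1) + Real.log (Real.sqrt l2) := by
    rw [hL, trace_aeval hSH q,
      Finset.sum_congr rfl (fun i _ => hqe i),
      eig_sum_transfer hSH _ hdetS Real.log, Fin.sum_univ_three]
    simp
  have htr2 : ((matLog (matSqrt A)) * (matLog (matSqrt A))).trace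
      = Real.log (Real.sqrt l1) ^ 2 + Real.log (Real.sqrt l2) ^ 2 := by
    rw [hL, ← _root_.map_mul, trace_aeval hSH (q * q)]
    have e2 : ∀ i, (q*q).eval (hSH.eigenvalues i)
        = (fun x => Real.log x ^ 2) (hSH.eigenvalues i) := by
      intro i
      rw [Polynomial.eval_mul, hqe i]
      ring
    rw [Finset.sum_congr rfl (fun i _ => e2 i),
      eig_sum_transfer hSH _ hdetS (fun x => Real.log x ^ 2), Fin.sum_univ_three]
    simp
  rw [nsq_dev3 _ hLt, htr, htr2,
    Real.log_sqrt (le_of_lt hl1), Real.log_sqrt (le_of_lt hl2)]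
  ring

-- ===== concrete setup =====
def c2 : ℝ := Real.sqrt 2
def aa : ℝ := Real.exp 20
def bb : ℝ := Real.exp 15
def xx : ℝ := Real.exp 40
def yy : ℝ := Real.exp 30
def sf (t : ℝ) : ℝ := t / (29 * c2)
def sd : ℝ := 1 / (29 * c2)
def Tf (t : ℝ) : ℝ := xx + yy + (20*xx - 50*yy) * sf t + (200*xx + 1250*yy) * sf t ^ 2
def Df (t : ℝ) : ℝ := xx * yy * (1 - 15 * sf t) ^ 2
def Ef (t : ℝ) : ℝ := Tf t ^ 2 - 4 * Df t
def Rf (t : ℝ) : ℝ := Real.sqrt (Ef t)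
def lamP (t : ℝ) : ℝ := (Tf t + Rf t) / 2
def lamM (t : ℝ) : ℝ := (Tf t - Rf t) / 2
def gfun (t : ℝ) : ℝ := (Real.log (lamP t) ^ 2 + Real.log (lamM t) ^ 2) / 4
  - (Real.log (lamP t) + Real.log (lamM t)) ^ 2 / 12

lemma hc2 : c2 ^ 2 = 2 := Real.sq_sqrt (by norm_num)
lemma hc2pos : 0 < c2 := Real.sqrt_pos.mpr (by norm_num)
lemma hc2one : 1 ≤ c2 := by nlinarith [hc2, hc2pos]
lemma c229pos : (0:ℝ) < 29 * c2 := mul_pos (by norm_num) hc2pos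
lemma sdpos : 0 < sd := by rw [sd]; exact div_pos one_pos c229pos
lemma yypos : 0 < yy := Real.exp_pos _
lemma xxpos : 0 < xx := Real.exp_pos _
lemma hxxyy : xx = Real.exp 10 * yy := by rw [xx, yy, ← Real.exp_add]; norm_num
lemma hexp10 : 36 ≤ Real.exp 10 := by
  have h5 : (6:ℝ) ≤ Real.exp 5 := by
    have := Real.add_one_le_exp (5:ℝ); linarith
  have : Real.exp 10 = Real.exp 5 * Real.exp 5 := by rw [← Real.exp_add]; norm_num
  nlinarith [Real.exp_pos (5:ℝ)]
lemma hyy1 : 31 ≤ yy := by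
  rw [yy]; have := Real.add_one_le_exp (30:ℝ); linarith
lemma hxx36 : 36 * yy ≤ xx := by
  rw [hxxyy]; nlinarith [hexp10, hyy1]
lemma haa : aa ^ 2 = xx := by rw [aa, xx, sq, ← Real.exp_add]; norm_num
lemma hbb : bb ^ 2 = yy := by rw [bb, yy, sq, ← Real.exp_add]; norm_num

lemma sf_bound {t : ℝ} (ht : t ∈ Set.Ioo (-(1/10) : ℝ) (1/10)) : |sf t| ≤ 1/290 := by
  obtain ⟨h1, h2⟩ := ht
  rw [sf, abs_div, abs_of_pos c229pos, div_le_div_iff₀ c229pos (by norm_num)]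
  have : |t| ≤ 1/10 := abs_le.mpr ⟨by linarith, by linarith⟩
  nlinarith [hc2one]

lemma Tf_lb {t : ℝ} (ht : t ∈ Set.Ioo (-(1/10) : ℝ) (1/10)) :
    xx + yy - (20*xx + 50*yy) * (1/290) ≤ Tf t := by
  have hs := abs_le.mp (sf_bound ht)
  rw [Tf]
  nlinarith [sq_nonneg (sf t), xxpos, yypos, hs.1, hs.2]

lemma Tf_ub {t : ℝ} (ht : t ∈ Set.Ioo (-(1/10) : ℝ) (1/10)) :
    Tf t ≤ xx + yy + (20*xx + 50*yy) * (1/290) + (200*xx + 1250*yy) * (1/290)^2 := by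
  have hs := abs_le.mp (sf_bound ht)
  have hs2 : sf t ^ 2 ≤ (1/290)^2 := by nlinarith [hs.1, hs.2]
  rw [Tf]
  nlinarith [xxpos, yypos, hs.1, hs.2, hs2]

lemma Tf_gt_two {t : ℝ} (ht : t ∈ Set.Ioo (-(1/10) : ℝ) (1/10)) : 2 < Tf t := by
  have := Tf_lb ht
  nlinarith [hxx36, hyy1, yypos]

lemma Ef_eq (t : ℝ) : Ef t =
    (aa^2*(1+10*sf t)^2 + 625*bb^2*(sf t)^2 - (100*aa^2*(sf t)^2 + bb^2*(1-25*sf t)^2))^2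
    + 4*(10*aa^2*(sf t)*(1+10*sf t) - 25*bb^2*(sf t)*(1-25*sf t))^2 := by
  rw [Ef, Tf, Df, ← haa, ← hbb]
  ring

lemma Ndiff_pos {t : ℝ} (ht : t ∈ Set.Ioo (-(1/10) : ℝ) (1/10)) :
    0 < aa^2*(1+10*sf t)^2 + 625*bb^2*(sf t)^2 - (100*aa^2*(sf t)^2 + bb^2*(1-25*sf t)^2) := by
  have hs := abs_le.mp (sf_bound ht)
  have hs2 : sf t ^ 2 ≤ (1/290)^2 := by nlinarith [hs.1, hs.2]
  have e1 : aa^2*(1+10*sf t)^2 - 100*aa^2*(sf t)^2 = aa^2*(1+20*sf t) := by ring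
  have e2 : bb^2*(1-25*sf t)^2 ≤ yy * (1+25/290)^2 := by
    rw [hbb]
    have : (1-25*sf t)^2 ≤ (1+25/290)^2 := by nlinarith [hs.1, hs.2]
    nlinarith [yypos]
  have e3 : xx*(1-20/290) ≤ aa^2*(1+20*sf t) := by
    rw [haa]
    nlinarith [xxpos, hs.1, hs.2]
  nlinarith [sq_nonneg (bb*sf t), hxx36, hyy1, yypos]

lemma Ef_pos {t : ℝ} (ht : t ∈ Set.Ioo (-(1/10) : ℝ) (1/10)) : 0 < Ef t := by
  rw [Ef_eq]
  have h := Ndiff_pos ht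
  nlinarith [sq_nonneg (10*aa^2*(sf t)*(1+10*sf t) - 25*bb^2*(sf t)*(1-25*sf t))]

lemma Rf_pos {t : ℝ} (ht : t ∈ Set.Ioo (-(1/10) : ℝ) (1/10)) : 0 < Rf t :=
  Real.sqrt_pos.mpr (Ef_pos ht)

lemma Rf_sq {t : ℝ} (ht : t ∈ Set.Ioo (-(1/10) : ℝ) (1/10)) : Rf t ^ 2 = Ef t :=
  Real.sq_sqrt (Ef_pos ht).le

lemma Rf_lt {t : ℝ} (ht : t ∈ Set.Ioo (-(1/10) : ℝ) (1/10)) : Rf t < Tf t - 2 := by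
  have hs := abs_le.mp (sf_bound ht)
  have hT := Tf_gt_two ht
  have hDT : Tf t - 1 < Df t := by
    have h1 : (55/58 : ℝ) ≤ 1 - 15 * sf t := by nlinarith [hs.1, hs.2]
    have h2 : (55/58:ℝ)^2 * (xx*yy) ≤ Df t := by
      rw [Df]
      have : (55/58:ℝ)^2 ≤ (1-15*sf t)^2 := by nlinarith [hs.1, hs.2]
      nlinarith [mul_pos xxpos yypos]
    have h3 := Tf_ub ht
    nlinarith [hxx36, hyy1, xxpos, yypos, mul_pos xxpos yypos]
  have hkey : Ef t < (Tf t - 2) ^ 2 := by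
    rw [Ef]; nlinarith
  rw [Rf]
  exact (Real.sqrt_lt' (by linarith)).mpr hkey
lemma lamM_gt_one {t : ℝ} (ht : t ∈ Set.Ioo (-(1/10) : ℝ) (1/10)) : 1 < lamM t := by
  have := Rf_lt ht; rw [lamM]; linarith

lemma lamM_lt_lamP {t : ℝ} (ht : t ∈ Set.Ioo (-(1/10) : ℝ) (1/10)) : lamM t < lamP t := by
  have := Rf_pos ht; rw [lamM, lamP]; linarith

lemma lam_sum (t : ℝ) : lamP t + lamM t = Tf t := by rw [lamP, lamM]; ring

lemma lam_prod {t : ℝ} (ht : t ∈ Set.Ioo (-(1/10) : ℝ) (1/10)) :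
    lamP t * lamM t = Df t := by
  have h := Rf_sq ht
  rw [lamP, lamM]
  have hre : Rf t ^ 2 = Tf t ^ 2 - 4 * Df t := by rw [h, Ef]
  linear_combination (-1/4 : ℝ) * hre

def Gm (t : ℝ) : Mat 3 :=
  ![![1, 0, 0],
    ![0, aa + 10*aa*sf t, -(25*bb)*sf t],
    ![0, 10*aa*sf t, bb - 25*bb*sf t]]

def Cm (t : ℝ) : Mat 3 := Gm t * (Gm t)ᵀ

lemma Cm_herm (t : ℝ) : (Cm t).IsHermitian := by
  rw [Cm, ← Matrix.conjTranspose_eq_transpose_of_trivial]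
  exact Matrix.isHermitian_mul_conjTranspose_self _

lemma det_Gm (t : ℝ) : (Gm t).det = aa * bb * (1 - 15 * sf t) := by
  rw [Matrix.det_fin_three, Gm]
  simp [Matrix.cons_val_zero, Matrix.cons_val_one, Matrix.head_cons]
  ring

lemma det_Cm (t : ℝ) (μ : ℝ) :
    (μ • (1 : Mat 3) - Cm t).det = (μ - 1) * (μ^2 - Tf t * μ + Df t) := by
  rw [Matrix.det_fin_three]
  simp only [Matrix.sub_apply, Cm, Matrix.mul_apply, Matrix.transpose_apply, Fin.sum_univ_three]
  simp [Cm, Gm, Matrix.sub_apply, Matrix.smul_apply, Matrix.one_apply, Matrix.mul_apply,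
    Fin.sum_univ_three]
  rw [Tf, Df, ← haa, ← hbb]
  ring

lemma det_Cm' {t : ℝ} (ht : t ∈ Set.Ioo (-(1/10) : ℝ) (1/10)) (μ : ℝ) :
    (μ • (1 : Mat 3) - Cm t).det = (μ - 1) * (μ - lamP t) * (μ - lamM t) := by
  rw [det_Cm]
  have hs := lam_sum t
  have hp := lam_prod ht
  linear_combination ((μ - 1) * μ) * hs - (μ - 1) * hp

lemma h_eq_gfun {t : ℝ} (ht : t ∈ Set.Ioo (-(1/10) : ℝ) (1/10)) :
    nsq (dev (matLog (matSqrt (Cm t)))) = gfun t := by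
  rw [main3 (Cm_herm t) (lamP t) (lamM t) (lamM_gt_one ht)
    (lamM_lt_lamP ht) (det_Cm' ht), gfun]

-- ===== calculus =====
def Tf' (t : ℝ) : ℝ := (20*xx - 50*yy) * sd + (200*xx + 1250*yy) * (2 * sf t * sd)
def Df' (t : ℝ) : ℝ := xx * yy * (2 * (1 - 15 * sf t) * (-(15 * sd)))
def Ef' (t : ℝ) : ℝ := 2 * Tf t * Tf' t - 4 * Df' t
def Rf' (t : ℝ) : ℝ := Ef' t / (2 * Rf t)
def lamP' (t : ℝ) : ℝ := (Tf' t + Rf' t) / 2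
def lamM' (t : ℝ) : ℝ := (Tf' t - Rf' t) / 2
def gfun' (t : ℝ) : ℝ :=
  (2 * Real.log (lamP t) * (lamP' t / lamP t) + 2 * Real.log (lamM t) * (lamM' t / lamM t)) / 4
  - 2 * (Real.log (lamP t) + Real.log (lamM t)) * (lamP' t / lamP t + lamM' t / lamM t) / 12

lemma lamM_pos {t : ℝ} (ht : t ∈ Set.Ioo (-(1/10) : ℝ) (1/10)) : 0 < lamM t :=
  lt_trans one_pos (lamM_gt_one ht)
lemma lamP_pos {t : ℝ} (ht : t ∈ Set.Ioo (-(1/10) : ℝ) (1/10)) : 0 < lamP t :=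
  lt_trans (lamM_pos ht) (lamM_lt_lamP ht)

lemma hasDerivAt_sf (t : ℝ) : HasDerivAt sf sd t := by
  have := (hasDerivAt_id t).div_const (29 * c2)
  unfold sf; simpa [sd] using this

lemma hasDerivAt_Tf (t : ℝ) : HasDerivAt Tf (Tf' t) t := by
  have H := (((hasDerivAt_sf t).const_mul (20*xx - 50*yy)).const_add (xx + yy)).add
    (((hasDerivAt_sf t).pow 2).const_mul (200*xx + 1250*yy))
  have hv : Tf' t = (20*xx - 50*yy) * sd + (200*xx + 1250*yy) * (↑(2:ℕ) * sf t ^ 1 * sd) := by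
    rw [Tf']; push_cast; ring
  rw [hv]; exact H

lemma hasDerivAt_Df (t : ℝ) : HasDerivAt Df (Df' t) t := by
  have H := (((((hasDerivAt_sf t).const_mul 15).const_sub 1).pow 2).const_mul (xx*yy))
  have hv : Df' t = (xx*yy) * (↑(2:ℕ) * (1 - 15 * sf t) ^ 1 * (-(15 * sd))) := by
    rw [Df']; push_cast; ring
  rw [hv]; exact H

lemma hasDerivAt_Ef (t : ℝ) : HasDerivAt Ef (Ef' t) t := by
  have H := ((hasDerivAt_Tf t).pow 2).sub ((hasDerivAt_Df t).const_mul 4)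
  have hv : Ef' t = ↑(2:ℕ) * Tf t ^ 1 * Tf' t - 4 * Df' t := by
    rw [Ef']; push_cast; ring
  rw [hv]; exact H

lemma hasDerivAt_Rf {t : ℝ} (ht : t ∈ Set.Ioo (-(1/10) : ℝ) (1/10)) :
    HasDerivAt Rf (Rf' t) t := by
  have H := (hasDerivAt_Ef t).sqrt (ne_of_gt (Ef_pos ht))
  exact H

lemma hasDerivAt_lamP {t : ℝ} (ht : t ∈ Set.Ioo (-(1/10) : ℝ) (1/10)) :
    HasDerivAt lamP (lamP' t) t :=
  ((hasDerivAt_Tf t).add (hasDerivAt_Rf ht)).div_const 2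

lemma hasDerivAt_lamM {t : ℝ} (ht : t ∈ Set.Ioo (-(1/10) : ℝ) (1/10)) :
    HasDerivAt lamM (lamM' t) t :=
  ((hasDerivAt_Tf t).sub (hasDerivAt_Rf ht)).div_const 2

lemma hasDerivAt_gfun {t : ℝ} (ht : t ∈ Set.Ioo (-(1/10) : ℝ) (1/10)) :
    HasDerivAt gfun (gfun' t) t := by
  have hPne : lamP t ≠ 0 := ne_of_gt (lamP_pos ht)
  have hMne : lamM t ≠ 0 := ne_of_gt (lamM_pos ht)
  have hlogP := (hasDerivAt_lamP ht).log hPne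
  have hlogM := (hasDerivAt_lamM ht).log hMne
  have HA := ((hlogP.pow 2).add (hlogM.pow 2)).div_const 4
  have HB := ((hlogP.add hlogM).pow 2).div_const 12
  have H := HA.sub HB
  have hv : gfun' t = (↑(2:ℕ) * Real.log (lamP t) ^ 1 * (lamP' t / lamP t)
      + ↑(2:ℕ) * Real.log (lamM t) ^ 1 * (lamM' t / lamM t)) / 4
      - ↑(2:ℕ) * (Real.log (lamP t) + Real.log (lamM t)) ^ 1 * (lamP' t / lamP t + lamM' t / lamM t) / 12 := by
    rw [gfun']; push_cast; ring
  rw [hv]; exact H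

-- ===== values at 0 =====
lemma f0 : sf 0 = 0 := by rw [sf]; ring
lemma fT : Tf 0 = xx + yy := by rw [Tf, f0]; ring
lemma fD : Df 0 = xx * yy := by rw [Df, f0]; ring
lemma fE : Ef 0 = (xx - yy) ^ 2 := by rw [Ef, fT, fD]; ring
lemma hxysub : 0 < xx - yy := by nlinarith [hxx36, hyy1]
lemma fR : Rf 0 = xx - yy := by
  rw [Rf, fE]; exact Real.sqrt_sq hxysub.le
lemma fP : lamP 0 = xx := by rw [lamP, fT, fR]; ring
lemma fM : lamM 0 = yy := by rw [lamM, fT, fR]; ring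
lemma flogP : Real.log xx = 40 := by rw [xx, Real.log_exp]
lemma flogM : Real.log yy = 30 := by rw [yy, Real.log_exp]
lemma fT' : Tf' 0 = (20*xx - 50*yy) * sd := by rw [Tf', f0]; ring
lemma fD' : Df' 0 = -(30 * (xx*yy) * sd) := by rw [Df', f0]; ring
lemma fE' : Ef' 0 = (40*xx^2 + 60*xx*yy - 100*yy^2) * sd := by
  rw [Ef', fT, fT', fD']; ring
lemma fR' : Rf' 0 = 10 * (2*xx + 5*yy) * sd := by
  rw [Rf', fE', fR]
  rw [div_eq_iff (by nlinarith [hxysub] : (2*(xx - yy)) ≠ 0)]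
  ring
lemma fP' : lamP' 0 = 20 * xx * sd := by rw [lamP', fT', fR']; ring
lemma fM' : lamM' 0 = -(50 * yy * sd) := by rw [lamM', fT', fR']; ring

lemma gfun'_zero : gfun' 0 = 0 := by
  rw [gfun', fP, fM, fP', fM', flogP, flogM]
  field_simp [ne_of_gt xxpos, ne_of_gt yypos]
  ring

-- ===== second derivative =====
def Vtidy : ℝ := sd^2 * (1300
  + (25/3) * ((400*xx + 2500*yy + 100*(2*xx - 5*yy)^2/(xx - yy))/(2*xx) - 400)
  + (10/3) * ((400*xx + 2500*yy - 100*(2*xx - 5*yy)^2/(xx - yy))/(2*yy) - 2500))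

lemma hsd2 : sd ^ 2 = 1/1682 := by
  rw [sd, div_pow, one_pow, mul_pow, hc2]
  norm_num

lemma arith1 : Vtidy = -(25 * (4 * Real.exp 10 - 49)) / (841 * (Real.exp 10 - 1)) := by
  rw [Vtidy, hsd2, hxxyy]
  have hQ := hexp10
  have hy := yypos
  have h1 : Real.exp 10 * yy - yy ≠ 0 := by nlinarith
  have h2 : Real.exp 10 - 1 ≠ 0 := by nlinarith
  have h3 : yy ≠ 0 := ne_of_gt hy
  field_simp
  ring

lemma hasDerivAt_Tf'0 : HasDerivAt Tf' ((200*xx + 1250*yy) * (2 * sd * sd)) 0 := by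
  have H := ((((hasDerivAt_sf 0).const_mul 2).mul_const sd).const_mul
    (200*xx + 1250*yy)).const_add ((20*xx - 50*yy) * sd)
  have hv : (200*xx + 1250*yy) * (2*sd*sd) = (200*xx + 1250*yy) * (2 * sd * sd) := rfl
  exact H

lemma hasDerivAt_Df'0 : HasDerivAt Df' (xx*yy * (2 * (-(15*sd)) * (-(15*sd)))) 0 := by
  have H := (((((hasDerivAt_sf 0).const_mul 15).const_sub 1).const_mul 2).mul_const
    (-(15*sd))).const_mul (xx*yy)
  exact H

set_option maxHeartbeats 2000000 in
lemma hasDerivAt_gfun'0 :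
    HasDerivAt gfun' (-(25 * (4 * Real.exp 10 - 49)) / (841 * (Real.exp 10 - 1))) 0 := by
  have h0 : (0:ℝ) ∈ Set.Ioo (-(1/10) : ℝ) (1/10) := by norm_num
  have hPne : lamP 0 ≠ 0 := by rw [fP]; exact ne_of_gt xxpos
  have hMne : lamM 0 ≠ 0 := by rw [fM]; exact ne_of_gt yypos
  have hRne : 2 * Rf 0 ≠ 0 := by rw [fR]; nlinarith [hxysub]
  have hEf' := (((hasDerivAt_Tf 0).const_mul 2).mul hasDerivAt_Tf'0).sub
    (hasDerivAt_Df'0.const_mul 4)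
  have hRf' := hEf'.div ((hasDerivAt_Rf h0).const_mul 2) hRne
  have hlamP' := (hasDerivAt_Tf'0.add hRf').div_const 2
  have hlamM' := (hasDerivAt_Tf'0.sub hRf').div_const 2
  have hQP := hlamP'.div (hasDerivAt_lamP h0) hPne
  have hQM := hlamM'.div (hasDerivAt_lamM h0) hMne
  have hlogP := (hasDerivAt_lamP h0).log hPne
  have hlogM := (hasDerivAt_lamM h0).log hMne
  have HA := (((hlogP.const_mul 2).mul hQP).add ((hlogM.const_mul 2).mul hQM)).div_const 4
  have HB := (((hlogP.add hlogM).const_mul 2).mul (hQP.add hQM)).div_const 12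
  have H := HA.sub HB
  rw [show -(25 * (4 * Real.exp 10 - 49)) / (841 * (Real.exp 10 - 1)) = Vtidy from arith1.symm]
  have H' : HasDerivAt gfun' _ 0 := H
  convert H' using 1
  simp only [Pi.add_apply, Pi.sub_apply, Pi.mul_apply, Pi.div_apply]
  rw [Vtidy, fP, fM, fP', fM', fT, fT', fD', fR, fR', flogP, flogM]
  have h1 : xx ≠ 0 := ne_of_gt xxpos
  have h2 : yy ≠ 0 := ne_of_gt yypos
  have h3 : xx - yy ≠ 0 := ne_of_gt hxysub
  field_simp
  ring

lemma detsq (t : ℝ) : (aa*bb*(1 - 15*sf t))^2 = Real.exp 70 * (15*t - 29*c2)^2/1682 := by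
  have he70 : (aa*bb)^2 = Real.exp 70 := by
    rw [aa, bb, ← Real.exp_add, sq, ← Real.exp_add]; norm_num
  have h1 : (1 - 15*sf t) = (29*c2 - 15*t)/(29*c2) := by
    rw [sf, sub_div, div_self (ne_of_gt c229pos)]
    ring
  have h2 : (29*c2)^2 = 1682 := by rw [mul_pow, hc2]; norm_num
  rw [show (aa*bb*(1 - 15*sf t))^2 = (aa*bb)^2*((29*c2 - 15*t)/(29*c2))^2 from by rw [h1]; ring,
    he70, div_pow, h2]
  ring

lemma det_pos' {t : ℝ} (ht : t ∈ Set.Ioo (-(1/10) : ℝ) (1/10)) : 0 < (Gm t).det := by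
  rw [det_Gm]
  have hs := abs_le.mp (sf_bound ht)
  have haapos : 0 < aa := Real.exp_pos _
  have hbbpos : 0 < bb := Real.exp_pos _
  have h3 : 0 < 1 - 15*sf t := by linarith [hs.2]
  exact mul_pos (mul_pos haapos hbbpos) h3


end AuxProof

/-- The explicit three-dimensional counterexample: for `F = diag(1, e²⁰, e¹⁵)`,
`ξ = (0, 1/√2, 1/√2)ᵀ` and `η = (1/29)(0, 10e²⁰, −25e¹⁵)ᵀ`, the function
`h(t) = ‖dev₃ log √((F + tξ⊗η)(F + tξ⊗η)ᵀ)‖²` (defined near `0`, where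
`[det(F + tξ⊗η)]² = e⁷⁰(15t − 29√2)²/1682 > 0`) is twice differentiable at `0` with
`h'(0) = 0` and `h''(0) = −25(4e¹⁰ − 49)/(841(e¹⁰ − 1)) < 0`. -/
theorem three_dim_concave_critical_point_devLogV
    (F : Mat 3) (hF : F = Matrix.diagonal ![1, Real.exp 20, Real.exp 15])
    (ξ η : Fin 3 → ℝ)
    (hξ : ξ = ![0, 1 / Real.sqrt 2, 1 / Real.sqrt 2])
    (hη : η = (1 / 29 : ℝ) • ![0, 10 * Real.exp 20, -(25 * Real.exp 15)])
    (h : ℝ → ℝ)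
    (hh : ∀ t : ℝ, h t = nsq (dev (matLog (matSqrt
      ((F + t • vecMulVec ξ η) * (F + t • vecMulVec ξ η)ᵀ))))) :
    (∀ t : ℝ, ((F + t • vecMulVec ξ η).det) ^ 2
      = Real.exp 70 * (15 * t - 29 * Real.sqrt 2) ^ 2 / 1682) ∧
    (∃ ε : ℝ, 0 < ε ∧ ∀ t ∈ Set.Ioo (-ε) ε, 0 < (F + t • vecMulVec ξ η).det) ∧
    DifferentiableAt ℝ h 0 ∧
    DifferentiableAt ℝ (deriv h) 0 ∧
    deriv h 0 = 0 ∧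
    deriv (deriv h) 0 = -(25 * (4 * Real.exp 10 - 49)) / (841 * (Real.exp 10 - 1)) ∧
    -(25 * (4 * Real.exp 10 - 49)) / (841 * (Real.exp 10 - 1)) < 0 := by
  have hGm : ∀ t : ℝ, F + t • Matrix.vecMulVec ξ η = Gm t := by
    intro t
    subst hF hξ hη
    ext i j
    fin_cases i <;> fin_cases j <;>
      simp [Gm, Matrix.vecMulVec_apply, Matrix.add_apply, Matrix.smul_apply,
        Matrix.diagonal, sf, aa, bb, c2, Matrix.vecHead, Matrix.vecTail] <;> ring
  have h0 : (0:ℝ) ∈ Set.Ioo (-(1/10) : ℝ) (1/10) := by norm_num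
  have hmem : Set.Ioo (-(1/10) : ℝ) (1/10) ∈ nhds (0:ℝ) := Ioo_mem_nhds (by norm_num) (by norm_num)
  have hhg : ∀ t ∈ Set.Ioo (-(1/10) : ℝ) (1/10), h t = gfun t := by
    intro t ht
    rw [hh t, hGm t, ← Cm, h_eq_gfun ht]
  have hev : h =ᶠ[nhds 0] gfun := Filter.eventuallyEq_of_mem hmem hhg
  have hdg : HasDerivAt gfun (gfun' 0) 0 := hasDerivAt_gfun h0
  have hdh : DifferentiableAt ℝ h 0 := by
    rw [hev.differentiableAt_iff]
    exact hdg.differentiableAt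
  have hderiv_eq : deriv h =ᶠ[nhds 0] gfun' := by
    refine (hev.deriv).trans ?_
    exact Filter.eventuallyEq_of_mem hmem (fun t ht => (hasDerivAt_gfun ht).deriv)
  have hdh2 : DifferentiableAt ℝ (deriv h) 0 := by
    rw [hderiv_eq.differentiableAt_iff]
    exact hasDerivAt_gfun'0.differentiableAt
  refine ⟨?_, ⟨1/10, by norm_num, ?_⟩, hdh, hdh2, ?_, ?_, ?_⟩
  · intro t
    rw [hGm t, det_Gm, detsq t, c2]
  · intro t ht
    rw [hGm t]
    exact det_pos' ht
  · rw [hev.deriv_eq, hdg.deriv, gfun'_zero]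
  · rw [hderiv_eq.deriv_eq, hasDerivAt_gfun'0.deriv]
  · have := hexp10
    apply div_neg_of_neg_of_pos <;> nlinarith
end

section
/- There exists no function Ψ: [0,∞) → ℝ such that [det(dev₃ log U)]² = Ψ(‖dev₃ log U‖²) for all F ∈ GL⁺(3), where U = √(FᵀF). Specifically, for U₁ = diag(e, e, e⁻²) and U₂ = diag(e^{√3}, 1, e^{−√3}) one has ‖dev₃ log U₁‖² = ‖dev₃ log U₂‖² = 6, while [det(dev₃ log U₁)]² = 4 and [det(dev₃ log U₂)]² = 0. -/
open Matrix Real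

attribute [local instance] Matrix.frobeniusNormedAddCommGroup Matrix.frobeniusNormedSpace

section Aux

lemma matFun_eq_cfc {n : ℕ} (f : ℝ → ℝ) (A : Mat n) (hA : A.IsHermitian) :
    matFun f A = cfc f A := by
  rw [matFun, dif_pos hA, hA.cfc_eq]
  simp [Matrix.IsHermitian.cfc, Function.comp_def]

lemma matFun_diagonal {n : ℕ} (f : ℝ → ℝ) (d : Fin n → ℝ) :
    matFun f (Matrix.diagonal d) = Matrix.diagonal (f ∘ d) := by
  classical
  have hA : (Matrix.diagonal d).IsHermitian := Matrix.isHermitian_diagonal d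
  have hsa : IsSelfAdjoint (Matrix.diagonal d) := hA
  rw [matFun_eq_cfc f _ hA]
  set s : Finset ℝ := Finset.image d Finset.univ with hs
  set p := Lagrange.interpolate s id f with hp
  have hnode : ∀ x ∈ s, Polynomial.eval x p = f x := by
    intro x hx
    exact Lagrange.eval_interpolate_at_node f (Set.injOn_id _) hx
  have hcong : cfc f (Matrix.diagonal d) = cfc p.eval (Matrix.diagonal d) := by
    apply cfc_congr
    intro x hx
    rw [spectrum_diagonal] at hx
    obtain ⟨i, rfl⟩ := hx
    exact (hnode _ (Finset.mem_image_of_mem d (Finset.mem_univ i))).symm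
  rw [hcong, cfc_polynomial p _ hsa]
  have : Matrix.diagonal d = Matrix.diagonalAlgHom ℝ d := rfl
  rw [this, Polynomial.aeval_algHom_apply]
  simp only [Matrix.diagonalAlgHom_apply]
  have key : Polynomial.aeval d p = f ∘ d := by
    funext i
    have h2 : (Polynomial.aeval d p) i = Polynomial.aeval (d i) p :=
      (Polynomial.aeval_algHom_apply (Pi.evalAlgHom ℝ (fun _ => ℝ) i) d p).symm
    have h3 : Polynomial.aeval (d i) p = Polynomial.eval (d i) p :=
      Polynomial.aeval_def (d i) p ▸ by simp [Polynomial.eval₂_eq_eval_map]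
    rw [Function.comp_apply, h2, h3]
    exact hnode _ (Finset.mem_image_of_mem d (Finset.mem_univ i))
  rw [key]

lemma dev_diagonal_of_trace (v : Fin 3 → ℝ) (h : v 0 + v 1 + v 2 = 0) :
    dev (Matrix.diagonal v) = Matrix.diagonal v := by
  unfold dev
  rw [Matrix.trace_diagonal, Fin.sum_univ_three, h]
  simp

lemma nsq_diagonal_s14 (v : Fin 3 → ℝ) :
    nsq (Matrix.diagonal v) = v 0 ^ 2 + v 1 ^ 2 + v 2 ^ 2 := by
  unfold nsq
  rw [Matrix.diagonal_transpose, Matrix.diagonal_mul_diagonal, Matrix.trace_diagonal,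
    Fin.sum_univ_three]
  ring

lemma matLog_diag_exp (a b c : ℝ) :
    matLog (Matrix.diagonal ![Real.exp a, Real.exp b, Real.exp c]) =
      Matrix.diagonal ![a, b, c] := by
  have hv : Real.log ∘ ![Real.exp a, Real.exp b, Real.exp c] = ![a, b, c] := by
    funext i
    fin_cases i <;> simp [Real.log_exp]
  rw [matLog, matFun_diagonal, hv]

lemma logU_diag_exp (a b c : ℝ) :
    logU (Matrix.diagonal ![Real.exp a, Real.exp b, Real.exp c]) =
      Matrix.diagonal ![a, b, c] := by
  rw [logU, Matrix.diagonal_transpose, Matrix.diagonal_mul_diagonal, matSqrt, matFun_diagonal]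
  have hv : (Real.sqrt ∘ fun i => ![Real.exp a, Real.exp b, Real.exp c] i *
      ![Real.exp a, Real.exp b, Real.exp c] i) = ![Real.exp a, Real.exp b, Real.exp c] := by
    funext i
    fin_cases i <;>
      simp [Real.sqrt_mul_self (Real.exp_nonneg _)]
  rw [hv, matLog_diag_exp]

lemma det_diag3 (v : Fin 3 → ℝ) : (Matrix.diagonal v).det = v 0 * v 1 * v 2 := by
  rw [Matrix.det_diagonal, Fin.prod_univ_three]

end Aux

/-- There is no function `Ψ : [0,∞) → ℝ` with `[det(dev₃ log U)]² = Ψ(‖dev₃ log U‖²)` for all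
`F ∈ GL⁺(3)` (where `U = √(FᵀF)`). Specifically, for `U₁ = diag(e, e, e⁻²)` and
`U₂ = diag(e^√3, 1, e^(−√3))` one has `‖dev₃ log U₁‖² = ‖dev₃ log U₂‖² = 6`, while
`[det(dev₃ log U₁)]² = 4` and `[det(dev₃ log U₂)]² = 0`. -/
theorem det_dev_log_not_function_of_norm
    (U₁ U₂ : Mat 3)
    (hU₁ : U₁ = Matrix.diagonal ![Real.exp 1, Real.exp 1, Real.exp (-2)])
    (hU₂ : U₂ = Matrix.diagonal ![Real.exp (Real.sqrt 3), 1, Real.exp (-Real.sqrt 3)]) :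
    (¬ ∃ Ψ : ℝ → ℝ, ∀ F ∈ GLp 3,
      ((dev (logU F)).det) ^ 2 = Ψ (nsq (dev (logU F)))) ∧
    nsq (dev (matLog U₁)) = 6 ∧
    nsq (dev (matLog U₂)) = 6 ∧
    ((dev (matLog U₁)).det) ^ 2 = 4 ∧
    ((dev (matLog U₂)).det) ^ 2 = 0 := by
  have h1exp : (1 : ℝ) = Real.exp 0 := by simp
  have hL1 : matLog U₁ = Matrix.diagonal ![(1:ℝ), 1, -2] := by
    rw [hU₁]
    have := matLog_diag_exp 1 1 (-2)
    simpa using this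
  have hL2 : matLog U₂ = Matrix.diagonal ![Real.sqrt 3, 0, -Real.sqrt 3] := by
    rw [hU₂, show (1:ℝ) = Real.exp 0 by simp]
    exact matLog_diag_exp _ _ _
  have hlogU1 : logU U₁ = Matrix.diagonal ![(1:ℝ), 1, -2] := by
    rw [hU₁]
    have := logU_diag_exp 1 1 (-2)
    simpa using this
  have hlogU2 : logU U₂ = Matrix.diagonal ![Real.sqrt 3, 0, -Real.sqrt 3] := by
    rw [hU₂, show (1:ℝ) = Real.exp 0 by simp]
    exact logU_diag_exp _ _ _
  have hdev1 : dev (Matrix.diagonal ![(1:ℝ), 1, -2]) = Matrix.diagonal ![(1:ℝ), 1, -2] :=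
    dev_diagonal_of_trace _ (by norm_num [Matrix.cons_val_two, Matrix.tail_cons, Matrix.head_cons])
  have hdev2 : dev (Matrix.diagonal ![Real.sqrt 3, 0, -Real.sqrt 3]) =
      Matrix.diagonal ![Real.sqrt 3, 0, -Real.sqrt 3] :=
    dev_diagonal_of_trace _ (by norm_num [Matrix.cons_val_two, Matrix.tail_cons, Matrix.head_cons])
  have hsq3 : Real.sqrt 3 ^ 2 = 3 := Real.sq_sqrt (by norm_num)
  have hn1 : nsq (Matrix.diagonal ![(1:ℝ), 1, -2]) = 6 := by
    rw [nsq_diagonal_s14]; norm_num [Matrix.cons_val_two, Matrix.tail_cons, Matrix.head_cons]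
  have hn2 : nsq (Matrix.diagonal ![Real.sqrt 3, 0, -Real.sqrt 3]) = 6 := by
    rw [nsq_diagonal_s14]
    simp only [Matrix.cons_val_zero, Matrix.cons_val_one, Matrix.head_cons,
      Matrix.cons_val_two, Matrix.tail_cons]
    rw [neg_pow]
    rw [hsq3]
    norm_num
  have hd1 : ((Matrix.diagonal ![(1:ℝ), 1, -2]).det) ^ 2 = 4 := by
    rw [det_diag3]; norm_num [Matrix.cons_val_two, Matrix.tail_cons, Matrix.head_cons]
  have hd2 : ((Matrix.diagonal ![Real.sqrt 3, 0, -Real.sqrt 3]).det) ^ 2 = 0 := by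
    rw [det_diag3]; norm_num
  refine ⟨?_, by rw [hL1, hdev1, hn1], by rw [hL2, hdev2, hn2],
    by rw [hL1, hdev1, hd1], by rw [hL2, hdev2, hd2]⟩
  rintro ⟨Ψ, hΨ⟩
  have hm1 : U₁ ∈ GLp 3 := by
    have hpos : (0:ℝ) < (Matrix.diagonal ![Real.exp 1, Real.exp 1, Real.exp (-2)]).det := by
      rw [det_diag3]
      simp only [Matrix.cons_val_zero, Matrix.cons_val_one, Matrix.head_cons,
        Matrix.cons_val_two, Matrix.tail_cons]
      positivity
    rw [hU₁]
    exact hpos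
  have hm2 : U₂ ∈ GLp 3 := by
    have hpos : (0:ℝ) < (Matrix.diagonal ![Real.exp (Real.sqrt 3), 1,
        Real.exp (-Real.sqrt 3)]).det := by
      rw [det_diag3]
      simp only [Matrix.cons_val_zero, Matrix.cons_val_one, Matrix.head_cons,
        Matrix.cons_val_two, Matrix.tail_cons]
      positivity
    rw [hU₂]
    exact hpos
  have e1 := hΨ U₁ hm1
  have e2 := hΨ U₂ hm2
  rw [hlogU1, hdev1, hn1, hd1] at e1
  rw [hlogU2, hdev2, hn2, hd2] at e2
  rw [← e2] at e1
  norm_num at e1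
end
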